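/- For N ≥ 1 and M ≥ 2, the graph G(N, M) is strongly connected if and only if M ≥ N + 1. -/

import Mathlib

/-- Edge relation of the configuration graph `G(N, M)`:
`(f, g)` is an edge iff for all `k`, `g k ≠ f k` iff `k` is the largest index in its `f`-fiber. -/
def RoomEdge (N M : ℕ) (f g : Fin N → Fin M) : Prop :=
  ∀ k : Fin N, g k ≠ f k ↔ ∀ j : Fin N, f j = f k → j ≤ k

/-- A directed path of length `n` from `f` to `g` in `G(N, M)`. -/
def RoomPath (N M : ℕ) (f g : Fin N → Fin M) (n : ℕ) : Prop :=
  ∃ p : ℕ → Fin N → Fin M, p 0 = f ∧ p n = g ∧ ∀ i < n, RoomEdge N M (p i) (p (i + 1))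

/-- `V_s`: configurations injective on the `M` largest indices `(N−M, N]`
(0-indexed: indices `k` with `N - M ≤ k`). -/
def RoomVs (N M : ℕ) (f : Fin N → Fin M) : Prop :=
  ∀ j k : Fin N, N - M ≤ (j : ℕ) → N - M ≤ (k : ℕ) → f j = f k → j = k

/-- `V_c`: configurations constant on the `M` largest indices `(N−M, N]`. -/
def RoomVc (N M : ℕ) (f : Fin N → Fin M) : Prop :=
  ∀ j k : Fin N, N - M ≤ (j : ℕ) → N - M ≤ (k : ℕ) → f j = f k

section StronglyConnectedAux
open Finset Relation Function

open Finset Relation Function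

/-- Greedy system-of-distinct-representatives choice. -/
lemma exists_avoiding {ι : Type*} {M : ℕ} (hM : 0 < M) :
    ∀ (l : List ι) (A : ι → Finset (Fin M)),
    (∀ i ∈ l, (A i).card + l.length ≤ M) → l.Nodup →
    ∃ h : ι → Fin M, (∀ i ∈ l, h i ∉ A i) ∧
      ∀ i ∈ l, ∀ j ∈ l, i ≠ j → h i ≠ h j := by
  classical
  intro l
  induction l with
  | nil => exact fun A _ _ => ⟨fun _ => ⟨0, hM⟩, by simp, by simp⟩
  | cons a l ih =>
    intro A hcard hnd
    obtain ⟨h, hA, hinj⟩ := ih A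
      (fun i hi => by have := hcard i (List.mem_cons_of_mem a hi); simp at this ⊢; omega)
      (List.Nodup.of_cons hnd)
    have hanl : a ∉ l := (List.nodup_cons.mp hnd).1
    have hne : ((A a ∪ l.toFinset.image h)ᶜ : Finset (Fin M)).Nonempty := by
      rw [← Finset.card_pos, Finset.card_compl]
      have h1 : (A a ∪ l.toFinset.image h).card ≤ (A a).card + l.length := by
        calc (A a ∪ l.toFinset.image h).card ≤ (A a).card + (l.toFinset.image h).card :=
              Finset.card_union_le _ _
          _ ≤ (A a).card + l.length := by
              have h3 := Finset.card_image_le (s := l.toFinset) (f := h)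
              have h4 := List.toFinset_card_le l
              omega
      have h2 := hcard a List.mem_cons_self
      simp only [List.length_cons] at h2
      simp only [Fintype.card_fin]
      omega
    obtain ⟨v, hv⟩ := hne
    simp only [Finset.mem_compl, Finset.mem_union, Finset.mem_image, List.mem_toFinset,
      not_or, not_exists, not_and] at hv
    refine ⟨Function.update h a v, ?_, ?_⟩
    · intro i hi
      rcases List.mem_cons.mp hi with hi | hi
      · subst hi; simpa using hv.1
      · have hia : i ≠ a := fun e => hanl (e ▸ hi)
        rw [Function.update_of_ne hia]; exact hA i hi
    · intro i hi j hj hij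
      rcases List.mem_cons.mp hi with hi' | hi' <;> rcases List.mem_cons.mp hj with hj' | hj'
      · exact absurd (hi'.trans hj'.symm) hij
      · have hja : j ≠ a := fun e => hanl (e ▸ hj')
        rw [hi', Function.update_self, Function.update_of_ne hja]
        exact fun e => hv.2 j hj' e.symm
      · have hia : i ≠ a := fun e => hanl (e ▸ hi')
        rw [hj', Function.update_of_ne hia, Function.update_self]
        exact fun e => hv.2 i hi' e
      · have hia : i ≠ a := fun e => hanl (e ▸ hi')
        have hja : j ≠ a := fun e => hanl (e ▸ hj')
        rw [Function.update_of_ne hia, Function.update_of_ne hja]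
        exact hinj i hi' j hj' hij

lemma edge_of_inj' {N M : ℕ} {f g : Fin N → Fin M} (hf : Function.Injective f)
    (h : ∀ k, g k ≠ f k) :
    (∀ k : Fin N, g k ≠ f k ↔ ∀ j : Fin N, f j = f k → j ≤ k) := by
  intro k
  constructor
  · intro _ j hj; exact le_of_eq (hf hj)
  · intro _; exact h k

lemma inj_reach_inj' {N M : ℕ} (hM : N + 1 ≤ M)
    (E : (Fin N → Fin M) → (Fin N → Fin M) → Prop)
    (hE : ∀ {f g}, Function.Injective f → (∀ k, g k ≠ f k) → E f g)
    {F G : Fin N → Fin M} (hF : Function.Injective F) (hG : Function.Injective G) :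
    Relation.ReflTransGen E F G := by
  classical
  have : NeZero M := ⟨by omega⟩
  by_cases hFG : F = G
  · exact hFG ▸ Relation.ReflTransGen.refl
  set diffs : Finset (Fin M) := Finset.image (fun k => F k - G k) Finset.univ with hdiffs
  by_cases h0 : (0 : Fin M) ∈ diffs
  · have hN2 : 2 ≤ N := by
      obtain ⟨k, -, hk⟩ := Finset.mem_image.mp h0
      have hk' : F k = G k := sub_eq_zero.mp hk
      obtain ⟨k', hk'2⟩ : ∃ k', F k' ≠ G k' := by
        by_contra hc; push_neg at hc; exact hFG (funext hc)
      have hkk : k ≠ k' := by rintro rfl; exact hk'2 hk'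
      have h1 := k.isLt; have h2 := k'.isLt
      have h3 : (k : ℕ) ≠ (k' : ℕ) := fun e => hkk (Fin.ext e)
      omega
    have hdcard : diffs.card < M := by
      have h1 : diffs.card ≤ N := by
        rw [hdiffs]
        exact le_trans Finset.card_image_le (by simp)
      omega
    obtain ⟨d, hd⟩ : ∃ d, d ∉ diffs := by
      have : (diffsᶜ : Finset (Fin M)).Nonempty := by
        rw [← Finset.card_pos, Finset.card_compl, Fintype.card_fin]; omega
      obtain ⟨d, hd⟩ := this; exact ⟨d, Finset.mem_compl.mp hd⟩
    have hd0 : d ≠ 0 := fun e => hd (e ▸ h0)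
    obtain ⟨s, hs⟩ : ∃ s : Fin M, s ∉ ({0, -d} : Finset (Fin M)) := by
      have : (({0, -d} : Finset (Fin M))ᶜ).Nonempty := by
        rw [← Finset.card_pos, Finset.card_compl, Fintype.card_fin]
        have := Finset.card_insert_le (0 : Fin M) ({-d} : Finset (Fin M))
        simp only [Finset.card_singleton] at this
        omega
      obtain ⟨s, hs⟩ := this; exact ⟨s, Finset.mem_compl.mp hs⟩
    simp only [Finset.mem_insert, Finset.mem_singleton, not_or] at hs
    set t : Fin M := s + d with ht
    have ht0 : t ≠ 0 := fun e => hs.2 (eq_neg_of_add_eq_zero_left e)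
    have hFinj1 : Function.Injective (fun k => F k + s) :=
      (add_left_injective s).comp hF
    have hGinj1 : Function.Injective (fun k => G k + t) :=
      (add_left_injective t).comp hG
    refine Relation.ReflTransGen.head (hE hF ?_) (Relation.ReflTransGen.head (hE hFinj1 ?_)
      (Relation.ReflTransGen.single (hE hGinj1 ?_)))
    · intro k; simp [hs.1]
    · intro k heq
      apply hd
      rw [hdiffs, Finset.mem_image]
      refine ⟨k, Finset.mem_univ _, ?_⟩
      have h4 : G k + d = F k := by
        have h5 : G k + d + s = F k + s := by rw [← heq, ht]; abel
        exact add_right_cancel h5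
      rw [← h4]
      exact add_sub_cancel_left _ _
    · intro k; simp [ht0]
  · refine Relation.ReflTransGen.single (hE hF ?_)
    intro k heq
    apply h0
    rw [hdiffs, Finset.mem_image]
    exact ⟨k, Finset.mem_univ _, by rw [heq, sub_self]⟩

lemma step_lemma {N M : ℕ} (hM : N + 1 ≤ M) {f : Fin N → Fin M}
    (hninj : ¬ Function.Injective f) :
    ∃ f₁ : Fin N → Fin M,
      (∀ k : Fin N, f₁ k ≠ f k ↔ ∀ j : Fin N, f j = f k → j ≤ k) ∧
      (Finset.image f Finset.univ).card + 1 ≤ (Finset.image f₁ Finset.univ).card := by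
  classical
  set R := Finset.image f Finset.univ with hR
  set fib : Fin M → Finset (Fin N) := fun v => Finset.univ.filter (fun k => f k = v) with hfib
  set K := R.filter (fun v => 2 ≤ (fib v).card) with hK
  have hKR : K ⊆ R := Finset.filter_subset _ _
  have hcount : K.card + R.card ≤ N := by
    have h1 : (Finset.univ : Finset (Fin N)).card = ∑ v ∈ R, (fib v).card :=
      Finset.card_eq_sum_card_fiberwise (fun x _ => Finset.mem_image_of_mem f (Finset.mem_univ x))
    have h2 : ∀ v ∈ R, (if v ∈ K then 2 else 1) ≤ (fib v).card := by
      intro v hv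
      by_cases hvK : v ∈ K
      · simp only [hvK, if_true]; exact (Finset.mem_filter.mp hvK).2
      · simp only [hvK, if_false]
        obtain ⟨k, -, hk⟩ := Finset.mem_image.mp hv
        exact Finset.card_pos.mpr ⟨k, Finset.mem_filter.mpr ⟨Finset.mem_univ k, hk⟩⟩
    have h3 : ∑ v ∈ R, (if v ∈ K then 2 else 1) ≤ ∑ v ∈ R, (fib v).card := Finset.sum_le_sum h2
    have h4 : ∑ v ∈ R, (if v ∈ K then 2 else 1) = R.card + K.card := by
      have he : ∀ v ∈ R, (if v ∈ K then 2 else 1) = 1 + (if v ∈ K then 1 else 0) := by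
        intro v _; by_cases h : v ∈ K <;> simp [h]
      rw [Finset.sum_congr rfl he, Finset.sum_add_distrib]
      have : ∑ v ∈ R, (if v ∈ K then 1 else 0) = (R.filter (· ∈ K)).card := by
        rw [Finset.sum_boole]; simp
      rw [this, Finset.filter_mem_eq_inter, Finset.inter_eq_right.mpr hKR]
      simp
    have h5 : (Finset.univ : Finset (Fin N)).card = N := by simp
    omega
  -- choose fresh values
  obtain ⟨φ, hφ1, hφ2⟩ := exists_avoiding (ι := Fin M) (M := M) (by omega) R.toList
    (fun v => insert v K)
    (by
      intro v hv
      show (insert v K).card + R.toList.length ≤ M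
      have hc : (insert v K).card ≤ K.card + 1 := Finset.card_insert_le _ _
      have hl : R.toList.length = R.card := Finset.length_toList R
      omega)
    (Finset.nodup_toList R)
  set f₁ : Fin N → Fin M :=
    fun k => if (∀ j : Fin N, f j = f k → j ≤ k) then φ (f k) else f k with hf₁
  have hmemR : ∀ k, f k ∈ R := fun k => Finset.mem_image_of_mem f (Finset.mem_univ k)
  have hφne : ∀ v ∈ R, φ v ≠ v ∧ φ v ∉ K := by
    intro v hv
    have := hφ1 v (Finset.mem_toList.mpr hv)
    simp only [Finset.mem_insert, not_or] at this
    exact ⟨this.1, this.2⟩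
  refine ⟨f₁, ?_, ?_⟩
  · intro k
    by_cases hmax : ∀ j : Fin N, f j = f k → j ≤ k
    · have : f₁ k = φ (f k) := by
        show (if (∀ j : Fin N, f j = f k → j ≤ k) then φ (f k) else f k) = φ (f k)
        rw [if_pos hmax]
      rw [this]
      exact iff_of_true (hφne (f k) (hmemR k)).1 hmax
    · have : f₁ k = f k := by
        show (if (∀ j : Fin N, f j = f k → j ≤ k) then φ (f k) else f k) = f k
        rw [if_neg hmax]
      rw [this]
      exact iff_of_false (fun h => h rfl) hmax
  · -- cardinality
    have hq : 1 ≤ K.card := by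
      rw [Function.not_injective_iff] at hninj
      obtain ⟨a, b, hab, hne⟩ := hninj
      have h2 : 2 ≤ (fib (f a)).card :=
        Finset.one_lt_card.mpr ⟨a, Finset.mem_filter.mpr ⟨Finset.mem_univ _, rfl⟩,
          b, Finset.mem_filter.mpr ⟨Finset.mem_univ _, hab.symm⟩, hne⟩
      exact Finset.card_pos.mpr ⟨f a, Finset.mem_filter.mpr ⟨hmemR a, h2⟩⟩
    have hmaxex : ∀ v ∈ R, (fib v).Nonempty := by
      intro v hv
      obtain ⟨k, -, hk⟩ := Finset.mem_image.mp hv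
      exact ⟨k, Finset.mem_filter.mpr ⟨Finset.mem_univ k, hk⟩⟩
    have hsub : K ∪ R.image φ ⊆ Finset.image f₁ Finset.univ := by
      intro x hx
      rcases Finset.mem_union.mp hx with hx | hx
      · -- x ∈ K : kept by a non-max element of its fiber
        have h2 := (Finset.mem_filter.mp hx).2
        have hne := hmaxex x (hKR hx)
        set m := (fib x).max' hne with hm
        have hmmem : m ∈ fib x := (fib x).max'_mem hne
        obtain ⟨k, hkmem, hkm⟩ := Finset.exists_mem_ne h2 m
        have hfk : f k = x := (Finset.mem_filter.mp hkmem).2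
        have hfm : f m = x := (Finset.mem_filter.mp hmmem).2
        have hnotmax : ¬ (∀ j : Fin N, f j = f k → j ≤ k) := by
          intro hmax
          have h5 : m ≤ k := hmax m (by rw [hfm, hfk])
          have h6 : k ≤ m := Finset.le_max' _ _ hkmem
          exact hkm (le_antisymm h6 h5)
        have : f₁ k = x := by
          show (if (∀ j : Fin N, f j = f k → j ≤ k) then φ (f k) else f k) = x
          rw [if_neg hnotmax, hfk]
        exact this ▸ Finset.mem_image_of_mem f₁ (Finset.mem_univ k)
      · -- x ∈ image φ : produced by the max of the fiber
        obtain ⟨v, hv, rfl⟩ := Finset.mem_image.mp hx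
        have hne := hmaxex v hv
        set m := (fib v).max' hne with hm
        have hmmem : m ∈ fib v := (fib v).max'_mem hne
        have hfm : f m = v := (Finset.mem_filter.mp hmmem).2
        have hmax : ∀ j : Fin N, f j = f m → j ≤ m := by
          intro j hj
          exact Finset.le_max' _ _ (Finset.mem_filter.mpr ⟨Finset.mem_univ j, by rw [hj, hfm]⟩)
        have : f₁ m = φ v := by
          show (if (∀ j : Fin N, f j = f m → j ≤ m) then φ (f m) else f m) = φ v
          rw [if_pos hmax, hfm]
        exact this ▸ Finset.mem_image_of_mem f₁ (Finset.mem_univ m)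
    have hdisj : Disjoint K (R.image φ) := by
      rw [Finset.disjoint_left]
      intro x hxK hxim
      obtain ⟨v, hv, rfl⟩ := Finset.mem_image.mp hxim
      exact (hφne v hv).2 hxK
    have hcardim : (R.image φ).card = R.card := by
      apply Finset.card_image_of_injOn
      intro v hv w hw hvw
      by_contra hne
      exact hφ2 v (Finset.mem_toList.mpr hv) w (Finset.mem_toList.mpr hw) hne hvw
    have := Finset.card_le_card hsub
    rw [Finset.card_union_of_disjoint hdisj, hcardim] at this
    omega

lemma reach_inj {N M : ℕ} (hM : N + 1 ≤ M) (f : Fin N → Fin M) :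
    ∃ F, Function.Injective F ∧ Relation.ReflTransGen (RoomEdge N M) f F := by
  classical
  suffices H : ∀ d (f : Fin N → Fin M), N - (Finset.image f Finset.univ).card ≤ d →
      ∃ F, Function.Injective F ∧ Relation.ReflTransGen (RoomEdge N M) f F by
    exact H N f (by omega)
  intro d
  induction d with
  | zero =>
    intro f hf
    refine ⟨f, ?_, Relation.ReflTransGen.refl⟩
    have hle : (Finset.image f Finset.univ).card ≤ N := by
      exact le_trans Finset.card_image_le (by simp)
    have : (Finset.image f Finset.univ).card = N := by omega
    have hinj : Set.InjOn f (Finset.univ : Finset (Fin N)) :=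
      Finset.injOn_of_card_image_eq (by rw [this]; simp)
    intro a b hab
    exact hinj (by simp) (by simp) hab
  | succ d ih =>
    intro f hf
    by_cases hinj : Function.Injective f
    · exact ⟨f, hinj, Relation.ReflTransGen.refl⟩
    · obtain ⟨f₁, hedge, hcard⟩ := step_lemma hM hinj
      have hle : (Finset.image f₁ Finset.univ).card ≤ N := by
        exact le_trans Finset.card_image_le (by simp)
      obtain ⟨F, hF, hp⟩ := ih f₁ (by omega)
      exact ⟨F, hF, Relation.ReflTransGen.head hedge hp⟩


end StronglyConnectedAux

open Finset Relation Function in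
theorem strongly_connected_iff (N M : ℕ) (hN : 1 ≤ N) (hM : 2 ≤ M) :
    (∀ f g : Fin N → Fin M, Relation.ReflTransGen (RoomEdge N M) f g) ↔ N + 1 ≤ M := by
  classical
  constructor
  · intro hconn
    by_contra hlt
    have hMN : M ≤ N := by omega
    set c0 : Fin M := ⟨0, by omega⟩ with hc0
    set c1 : Fin M := ⟨1, by omega⟩ with hc1
    have hpath := hconn (fun _ => c1) (fun _ => c0)
    rcases Relation.ReflTransGen.cases_tail hpath with heq | ⟨h', -, e⟩
    · have := congrFun heq ⟨0, by omega⟩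
      simp only [hc0, hc1, Fin.mk.injEq] at this
      omega
    · -- e : RoomEdge N M h' (fun _ => c0)
      have claim1 : ∀ k, h' k ≠ c0 := by
        intro k hk
        set T : Finset (Fin N) := Finset.univ.filter (fun j => h' j = c0) with hT
        have hTne : T.Nonempty := ⟨k, Finset.mem_filter.mpr ⟨Finset.mem_univ _, hk⟩⟩
        set k₀ := T.max' hTne with hk₀
        have hk₀mem : h' k₀ = c0 := (Finset.mem_filter.mp (T.max'_mem hTne)).2
        have hmax : ∀ j, h' j = h' k₀ → j ≤ k₀ := by
          intro j hj
          exact Finset.le_max' T j (Finset.mem_filter.mpr ⟨Finset.mem_univ j, hj.trans hk₀mem⟩)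
        exact ((e k₀).mpr hmax) hk₀mem.symm
      have claim2 : Function.Injective h' := by
        intro a b hab
        have ha := (e a).mp (fun h => (claim1 a) h.symm)
        have hb := (e b).mp (fun h => (claim1 b) h.symm)
        exact le_antisymm (hb a hab) (ha b hab.symm)
      have hsub : Finset.image h' Finset.univ ⊆ Finset.univ.erase c0 := by
        intro x hx
        obtain ⟨k, -, rfl⟩ := Finset.mem_image.mp hx
        exact Finset.mem_erase.mpr ⟨claim1 k, Finset.mem_univ _⟩
      have h1 : (Finset.image h' Finset.univ).card = N := by
        rw [Finset.card_image_of_injective _ claim2]; simp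
      have h2 := Finset.card_le_card hsub
      rw [h1, Finset.card_erase_of_mem (Finset.mem_univ _)] at h2
      simp only [Finset.card_univ, Fintype.card_fin] at h2
      omega
  · intro hNM f g
    obtain ⟨F, hF, p1⟩ := reach_inj hNM f
    obtain ⟨G, hGi, hGe⟩ : ∃ G : Fin N → Fin M, Function.Injective G ∧ RoomEdge N M G g := by
      obtain ⟨h, h1, h2⟩ := exists_avoiding (ι := Fin N) (M := M) (by omega)
        (List.finRange N) (fun k => {g k})
        (by intro i _; simp; omega)
        (List.nodup_finRange N)
      have hmem : ∀ i : Fin N, i ∈ List.finRange N := List.mem_finRange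
      refine ⟨h, ?_, ?_⟩
      · intro a b hab
        by_contra hne
        exact h2 a (hmem a) b (hmem b) hne hab
      · apply edge_of_inj'
        · intro a b hab
          by_contra hne
          exact h2 a (hmem a) b (hmem b) hne hab
        · intro k
          have := h1 k (hmem k)
          simp at this
          exact fun e => this e.symm
    have p2 : Relation.ReflTransGen (RoomEdge N M) F G :=
      inj_reach_inj' hNM (RoomEdge N M) (fun hf h => edge_of_inj' hf h) hF hGi
    exact (p1.trans p2).trans (Relation.ReflTransGen.single hGe)
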